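/- Let n ≥ 1, m > 1, and α ∈ (-∞, (m-1)/2). Let Ω be a bounded convex domain in ℝⁿ such that ⟨e₁,x⟩ > 0 for every x ∈ Ω, where e₁ is the first standard basis vector. Define φ : Ω → (0,∞) by φ(x) := ⟨e₁,x⟩^{1/α} if α ≠ 0 and φ(x) := e^{⟨e₁,x⟩} if α = 0 (so φ is α-concave in Ω). Suppose u : Ω × [0,∞) → ℝ is positive, u together with its first and second spatial partial derivatives and its time derivative is continuous on Ω × [0,∞), u satisfies the porous medium equation ∂_t u = Δ(u^m) pointwise on Ω × [0,∞), and u(·,0) = φ. Then there exists t > 0 such that u(·,t) is not α-concave in Ω. -/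

import Mathlib

open Set Filter
open scoped Topology

noncomputable section

/-- The admissible function `Φ_α` on `[0,∞)`: `Φ_α(r) = (r^α - 1)/α` for `α ≠ 0`,
`Φ₀(r) = log r`, with `Φ_α(0) = -∞` (we also set the irrelevant value `⊥` for `r < 0`). -/
def Phi (α : ℝ) : ℝ → EReal := fun r =>
  if r ≤ 0 then ⊥
  else if α = 0 then ((Real.log r : ℝ) : EReal)
  else (((r ^ α - 1) / α : ℝ) : EReal)

/-- `f` is `Φ_α`-concave (`α`-concave) on `Ω`. -/
def FConcaveOn {E : Type*} [AddCommGroup E] [Module ℝ E]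
    (F : ℝ → EReal) (Ω : Set E) (f : E → ℝ) : Prop :=
  ∀ x ∈ Ω, ∀ y ∈ Ω, ∀ lam : ℝ, lam ∈ Ioo (0:ℝ) 1 →
    ((1 - lam : ℝ) : EReal) * F (f x) + (lam : EReal) * F (f y)
      ≤ F (f ((1 - lam) • x + lam • y))

/-- strict convexity of r ^ β on (0,∞) when β(β-1) > 0 -/
lemma aux_strictConvex (β : ℝ) (hβ : 0 < β * (β - 1)) :
    StrictConvexOn ℝ (Ioi (0:ℝ)) (fun r : ℝ => r ^ β) := by
  apply strictConvexOn_of_deriv2_pos (convex_Ioi 0)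
  · intro x hx
    exact (Real.continuousAt_rpow_const x β (Or.inl (ne_of_gt hx))).continuousWithinAt
  · intro x hx
    rw [interior_Ioi] at hx
    have h1 : Set.EqOn (deriv fun r : ℝ => r ^ β) (fun r : ℝ => β * r ^ (β - 1)) (Ioi 0) := by
      intro r hr
      exact Real.deriv_rpow_const r β
    have h2 : deriv (deriv fun r : ℝ => r ^ β) x
        = deriv (fun r : ℝ => β * r ^ (β - 1)) x :=
      Filter.EventuallyEq.deriv_eq (Filter.eventuallyEq_of_mem (isOpen_Ioi.mem_nhds hx) h1)
    have h3 : HasDerivAt (fun r : ℝ => β * r ^ (β - 1)) (β * ((β - 1) * x ^ (β - 1 - 1))) x :=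
      (Real.hasDerivAt_rpow_const (Or.inl (ne_of_gt hx))).const_mul β
    have h4 : (deriv^[2] (fun r : ℝ => r ^ β)) x = β * ((β - 1) * x ^ (β - 1 - 1)) := by
      simp only [Function.iterate_succ, Function.iterate_zero, Function.comp_apply, id_eq]
      rw [h2, h3.deriv]
    rw [h4]
    have h5 : 0 < x ^ (β - 1 - 1) := Real.rpow_pos_of_pos hx _
    nlinarith

/-- Laplacian of a function depending only on one coordinate -/
lemma aux_lap {n : ℕ} (k : Fin n) (Ω : Set (EuclideanSpace ℝ (Fin n)))
    (hΩopen : IsOpen Ω) (hpos : ∀ y ∈ Ω, 0 < y k)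
    (ψ ψd ψdd : ℝ → ℝ)
    (hψ : ∀ r : ℝ, 0 < r → HasDerivAt ψ (ψd r) r)
    (hψd : ∀ r : ℝ, 0 < r → HasDerivAt ψd (ψdd r) r)
    (f : EuclideanSpace ℝ (Fin n) → ℝ)
    (hf : ∀ y ∈ Ω, f y = ψ (y k))
    {x : EuclideanSpace ℝ (Fin n)} (hx : x ∈ Ω) :
    ∑ i : Fin n, fderiv ℝ (fun y => fderiv ℝ f y (EuclideanSpace.single i 1)) x
      (EuclideanSpace.single i 1) = ψdd (x k) := by
  classical
  set π : EuclideanSpace ℝ (Fin n) →L[ℝ] ℝ := EuclideanSpace.proj k with hπ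
  have hπapp : ∀ z : EuclideanSpace ℝ (Fin n), π z = z k := fun _ => rfl
  have hπsingle : ∀ i : Fin n, π (EuclideanSpace.single i 1) = if k = i then 1 else 0 := by
    intro i
    rw [hπapp, EuclideanSpace.single_apply]
  have hd1 : ∀ y ∈ Ω, fderiv ℝ f y = ψd (y k) • π := by
    intro y hy
    have h1 : HasFDerivAt (fun z : EuclideanSpace ℝ (Fin n) => ψ (π z))
        (ψd (π y) • π) y :=
      (hψ _ (hpos y hy)).comp_hasFDerivAt y π.hasFDerivAt
    have h2 : f =ᶠ[𝓝 y] fun z => ψ (π z) :=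
      Filter.eventuallyEq_of_mem (hΩopen.mem_nhds hy) (fun z hz => hf z hz)
    exact (h1.congr_of_eventuallyEq h2).fderiv
  have hval : ∀ i : Fin n, ∀ y ∈ Ω,
      fderiv ℝ f y (EuclideanSpace.single i 1) = (if k = i then (1:ℝ) else 0) * ψd (π y) := by
    intro i y hy
    rw [hd1 y hy]
    simp only [ContinuousLinearMap.smul_apply, smul_eq_mul, hπsingle i, hπapp]
    ring
  have hsum : ∀ i : Fin n,
      fderiv ℝ (fun y => fderiv ℝ f y (EuclideanSpace.single i 1)) x (EuclideanSpace.single i 1)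
        = if k = i then ψdd (x k) else 0 := by
    intro i
    have h2 : (fun y => fderiv ℝ f y (EuclideanSpace.single i 1)) =ᶠ[𝓝 x]
        fun y => (if k = i then (1:ℝ) else 0) * ψd (π y) :=
      Filter.eventuallyEq_of_mem (hΩopen.mem_nhds hx) (fun y hy => hval i y hy)
    have h3 : HasFDerivAt (fun y => (if k = i then (1:ℝ) else 0) * ψd (π y))
        ((if k = i then (1:ℝ) else 0) • (ψdd (π x) • π)) x :=
      ((hψd _ (hpos x hx)).comp_hasFDerivAt x π.hasFDerivAt).const_mul _
    rw [(h3.congr_of_eventuallyEq h2).fderiv]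
    simp only [ContinuousLinearMap.smul_apply, smul_eq_mul, hπsingle i, hπapp]
    by_cases hik : k = i <;> simp [hik]
  rw [Finset.sum_congr rfl (fun i _ => hsum i), Finset.sum_ite_eq Finset.univ k
    (fun _ => ψdd (x k))]
  simp

lemma aux_hasDeriv (g : ℝ → ℝ) (w : ℝ) (hw : derivWithin g (Ici (0:ℝ)) 0 = w)
    (hne : w ≠ 0) : HasDerivWithinAt g w (Ici 0) 0 := by
  have hdiff : DifferentiableWithinAt ℝ g (Ici 0) 0 := by
    by_contra hc
    rw [derivWithin_zero_of_not_differentiableWithinAt hc] at hw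
    exact hne hw.symm
  have h2 := hdiff.hasDerivWithinAt
  rwa [hw] at h2

lemma aux_mul_gap (C X Y Z : ℝ) (hC : 0 < C) (hg : 0 < X + Y - 2*Z) :
    0 < C * X + C * Y - 2 * (C * Z) := by nlinarith

lemma aux_pos_assoc (c r : ℝ) (hc : 0 < c * (c - 1)) (hr : 0 < r) :
    0 < c * ((c - 1) * r) := by nlinarith

lemma aux_exp_pos3 (x m : ℝ) (hm : 1 < m) : 0 < Real.exp x * m * m := by
  have h1 := Real.exp_pos x
  have hm0 : 0 < m := by linarith
  exact mul_pos (mul_pos h1 hm0) hm0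

lemma aux_expgap (a h c : ℝ) (hh : 0 < h) (hc : 0 < c) :
    0 < Real.exp ((a+h)*c) + Real.exp ((a-h)*c) - 2 * Real.exp (a*c) := by
  set s : ℝ := Real.exp (h * c) with hs
  have hs0 : 0 < s := Real.exp_pos _
  have hs1 : s ≠ 1 := by
    rw [hs, Ne, Real.exp_eq_one_iff]
    exact ne_of_gt (mul_pos hh hc)
  have e1 : Real.exp ((a+h)*c) = Real.exp (a*c) * s := by
    rw [hs, ← Real.exp_add]; congr 1; ring
  have e2 : Real.exp ((a-h)*c) = Real.exp (a*c) * s⁻¹ := by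
    rw [hs, ← Real.exp_neg, ← Real.exp_add]; congr 1; ring
  rw [e1, e2]
  have hss : s * s⁻¹ = 1 := mul_inv_cancel₀ (ne_of_gt hs0)
  have h2 : 0 < (s - 1)^2 := by
    rcases lt_or_gt_of_ne (sub_ne_zero.2 hs1) with hlt | hgt
    · nlinarith
    · nlinarith
  have hkey : 2 < s + s⁻¹ := by nlinarith
  nlinarith [Real.exp_pos (a*c)]

lemma aux_rpowgap (β a h : ℝ) (hβ : 0 < β*(β-1)) (hh : 0 < h) (ham : 0 < a - h) :
    0 < (a+h)^β + (a-h)^β - 2 * a^β := by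
  have hS := aux_strictConvex β hβ
  have h1 : (a - h) ∈ Ioi (0:ℝ) := ham
  have h2 : (a + h) ∈ Ioi (0:ℝ) := by rw [mem_Ioi]; linarith
  have hne2 : a - h ≠ a + h := ne_of_lt (by linarith)
  have h3 := hS.2 h1 h2 hne2 (by norm_num : (0:ℝ) < 1/2)
    (by norm_num : (0:ℝ) < 1/2) (by norm_num)
  simp only [smul_eq_mul] at h3
  have hmid2 : 1/2 * (a - h) + 1/2 * (a + h) = a := by ring
  rw [hmid2] at h3
  linarith

lemma aux_signs (m α : ℝ) (hm : 1 < m) (hαne : α ≠ 0) (hα : α < (m-1)/2) :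
    0 < (m/α) * (m/α - 1) ∧
    0 < ((1/α)*(α-1) + (m/α - 1 - 1)) * (((1/α)*(α-1) + (m/α - 1 - 1)) - 1) := by
  have hβ : (1/α)*(α-1) + (m/α - 1 - 1) = (m-1)/α - 1 := by field_simp; ring
  rw [hβ]
  rcases lt_or_gt_of_ne hαne with hneg | hpos
  · have h1 : m/α < 0 := div_neg_of_pos_of_neg (by linarith) hneg
    have h2 : (m-1)/α < 0 := div_neg_of_pos_of_neg (by linarith) hneg
    constructor <;> nlinarith
  · have h1 : α * 2 < m - 1 := by
      have := (lt_div_iff₀ (by norm_num : (0:ℝ) < 2)).1 hα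
      linarith
    have h2 : 2 < (m-1)/α := (lt_div_iff₀ hpos).2 (by linarith)
    have h3 : m/α = (m-1)/α + 1/α := by ring
    have h4 : 0 < 1/α := by positivity
    constructor <;> nlinarith

lemma aux_final {n : ℕ} (Ω : Set (EuclideanSpace ℝ (Fin n))) (α : ℝ)
    (u : EuclideanSpace ℝ (Fin n) → ℝ → ℝ)
    (hu_pos : ∀ x ∈ Ω, ∀ t ∈ Ici (0:ℝ), 0 < u x t)
    (xp xm x₀ : EuclideanSpace ℝ (Fin n)) (hxp : xp ∈ Ω) (hxm : xm ∈ Ω) (hx₀ : x₀ ∈ Ω)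
    (hmid : (1 - (1/2 : ℝ)) • xp + (1/2 : ℝ) • xm = x₀)
    (Φr : ℝ → ℝ)
    (hΦr : ∀ r : ℝ, 0 < r → Phi α r = ((Φr r : ℝ) : EReal))
    (qp qm q0 : ℝ)
    (hdp : HasDerivWithinAt (fun t => Φr (u xp t)) qp (Ici 0) 0)
    (hdm : HasDerivWithinAt (fun t => Φr (u xm t)) qm (Ici 0) 0)
    (hd0 : HasDerivWithinAt (fun t => Φr (u x₀ t)) q0 (Ici 0) 0)
    (hzero : Φr (u xp 0) + Φr (u xm 0) - 2 * Φr (u x₀ 0) = 0)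
    (hL : 0 < qp + qm - 2 * q0) :
    ∃ t > (0:ℝ), ¬ FConcaveOn (Phi α) Ω (fun x => u x t) := by
  set D : ℝ → ℝ := fun t => Φr (u xp t) + Φr (u xm t) - 2 * Φr (u x₀ t) with hD
  have hDd : HasDerivWithinAt D (qp + qm - 2 * q0) (Ici 0) 0 :=
    (hdp.add hdm).sub (hd0.const_mul 2)
  rw [hasDerivWithinAt_iff_tendsto_slope] at hDd
  have hset : (Ici (0:ℝ)) \ {0} = Ioi 0 := Ici_sdiff_left
  rw [hset] at hDd
  have hev : ∀ᶠ t in 𝓝[>] (0:ℝ), 0 < slope D 0 t :=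
    hDd.eventually (eventually_gt_nhds hL)
  have hev2 : ∀ᶠ t in 𝓝[>] (0:ℝ), t ∈ Ioi (0:ℝ) := self_mem_nhdsWithin
  obtain ⟨t, hts, ht⟩ := (hev.and hev2).exists
  refine ⟨t, ht, ?_⟩
  have hD0 : D 0 = 0 := hzero
  have hslope : slope D 0 t = D t / t := by
    rw [slope_def_field, hD0]
    simp
  rw [hslope] at hts
  have hDt : 0 < D t := by
    have := mul_pos hts ht
    rwa [div_mul_cancel₀ _ (ne_of_gt ht)] at this
  intro hF
  have hmem : (1/2 : ℝ) ∈ Ioo (0:ℝ) 1 := by norm_num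
  have h := hF xp hxp xm hxm (1/2) hmem
  rw [hmid] at h
  have hups : 0 < u xp t := hu_pos xp hxp t (mem_Ici.2 (le_of_lt ht))
  have hums : 0 < u xm t := hu_pos xm hxm t (mem_Ici.2 (le_of_lt ht))
  have hu0s : 0 < u x₀ t := hu_pos x₀ hx₀ t (mem_Ici.2 (le_of_lt ht))
  rw [hΦr _ hups, hΦr _ hums, hΦr _ hu0s] at h
  rw [show ((1 - 1/2 : ℝ) : EReal) = (((1:ℝ)/2 : ℝ) : EReal) by norm_num] at h
  rw [← EReal.coe_mul, ← EReal.coe_mul, ← EReal.coe_add, EReal.coe_le_coe_iff] at h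
  have : D t = Φr (u xp t) + Φr (u xm t) - 2 * Φr (u x₀ t) := rfl
  linarith [hDt, h]

/-- disruption of `α`-concavity, `α < (m-1)/2`, for the porous
medium equation `∂_t u = Δ(u^m)`: with the `α`-concave initial datum
`φ(x) = ⟨e₁,x⟩^{1/α}` (resp. `e^{⟨e₁,x⟩}` for `α = 0`) on a bounded convex domain
`Ω` with `⟨e₁,x⟩ > 0` on `Ω`, any positive solution `u` of class `C^{2;1}` on
`Ω × [0,∞)` fails to be `α`-concave at some time `t > 0`. -/

theorem stmt18 {n : ℕ} (hn : 0 < n) (m : ℝ) (hm : 1 < m)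
    (α : ℝ) (hα : α < (m - 1) / 2)
    (Ω : Set (EuclideanSpace ℝ (Fin n)))
    (hΩconv : Convex ℝ Ω) (hΩopen : IsOpen Ω) (hΩne : Ω.Nonempty)
    (hΩbdd : Bornology.IsBounded Ω)
    (hΩpos : ∀ x ∈ Ω, 0 < x ⟨0, hn⟩)
    (φ : EuclideanSpace ℝ (Fin n) → ℝ)
    (hφ : ∀ x ∈ Ω, φ x =
      if α = 0 then Real.exp (x ⟨0, hn⟩) else (x ⟨0, hn⟩) ^ (1/α))
    (u : EuclideanSpace ℝ (Fin n) → ℝ → ℝ)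
    (hu_pos : ∀ x ∈ Ω, ∀ t ∈ Ici (0:ℝ), 0 < u x t)
    (hu_cont : ContinuousOn (fun p : EuclideanSpace ℝ (Fin n) × ℝ => u p.1 p.2)
      (Ω ×ˢ Ici 0))
    (hu_cont1 : ∀ i : Fin n,
      ContinuousOn (fun p : EuclideanSpace ℝ (Fin n) × ℝ =>
        fderiv ℝ (fun y => u y p.2) p.1 (EuclideanSpace.single i 1)) (Ω ×ˢ Ici 0))
    (hu_cont2 : ∀ i j : Fin n,
      ContinuousOn (fun p : EuclideanSpace ℝ (Fin n) × ℝ =>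
        fderiv ℝ (fun y => fderiv ℝ (fun z => u z p.2) y (EuclideanSpace.single i 1))
          p.1 (EuclideanSpace.single j 1)) (Ω ×ˢ Ici 0))
    (hu_contt : ContinuousOn (fun p : EuclideanSpace ℝ (Fin n) × ℝ =>
        derivWithin (fun s => u p.1 s) (Ici 0) p.2) (Ω ×ˢ Ici 0))
    (hu_pde : ∀ x ∈ Ω, ∀ t ∈ Ici (0:ℝ),
      derivWithin (fun s => u x s) (Ici 0) t =
        ∑ i : Fin n,
          fderiv ℝ (fun y => fderiv ℝ (fun z => (u z t) ^ m) y
            (EuclideanSpace.single i 1)) x (EuclideanSpace.single i 1))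
    (hu_init : ∀ x ∈ Ω, u x 0 = φ x) :
    ∃ t > (0:ℝ), ¬ FConcaveOn (Phi α) Ω (fun x => u x t) := by
  classical
  set k : Fin n := ⟨0, hn⟩ with hk
  obtain ⟨x₀, hx₀⟩ := hΩne
  obtain ⟨ε, hε, hball⟩ := Metric.isOpen_iff.1 hΩopen x₀ hx₀
  set E1 : EuclideanSpace ℝ (Fin n) := EuclideanSpace.single k 1 with hE1
  have hEnorm : ‖E1‖ = 1 := by simp [hE1]
  set h : ℝ := ε / 2 with hhdef
  have hh : 0 < h := by positivity
  set xp : EuclideanSpace ℝ (Fin n) := x₀ + h • E1 with hxpdef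
  set xm : EuclideanSpace ℝ (Fin n) := x₀ - h • E1 with hxmdef
  have hnormhE : ‖h • E1‖ = h := by
    rw [norm_smul, hEnorm, Real.norm_eq_abs, abs_of_pos hh, mul_one]
  have hxp : xp ∈ Ω := by
    apply hball
    rw [Metric.mem_ball, dist_eq_norm]
    have h1 : xp - x₀ = h • E1 := by rw [hxpdef]; abel
    rw [h1, hnormhE, hhdef]; linarith
  have hxm : xm ∈ Ω := by
    apply hball
    rw [Metric.mem_ball, dist_eq_norm]
    have h1 : xm - x₀ = -(h • E1) := by rw [hxmdef]; abel
    rw [h1, norm_neg, hnormhE, hhdef]; linarith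
  have hmid : (1 - (1/2 : ℝ)) • xp + (1/2 : ℝ) • xm = x₀ := by
    rw [hxpdef, hxmdef]; module
  set a : ℝ := x₀ k with ha
  have hcp : xp k = a + h := by
    rw [hxpdef]
    show x₀ k + (h • E1) k = a + h
    rw [ha, hE1]
    simp [EuclideanSpace.single_apply]
  have hcm : xm k = a - h := by
    rw [hxmdef]
    show x₀ k - (h • E1) k = a - h
    rw [ha, hE1]
    simp [EuclideanSpace.single_apply]
  have hap : 0 < a + h := by rw [← hcp]; exact hΩpos xp hxp
  have ham : 0 < a - h := by rw [← hcm]; exact hΩpos xm hxm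
  have ha0 : 0 < a := hΩpos x₀ hx₀
  have hupos : ∀ P ∈ Ω, 0 < u P 0 := fun P hP => hu_pos P hP 0 self_mem_Ici
  by_cases hα0 : α = 0
  · -- case α = 0
    have hf : ∀ y ∈ Ω, (u y 0) ^ m = (fun r : ℝ => Real.exp (r * m)) (y k) := by
      intro y hy
      rw [hu_init y hy, hφ y hy, if_pos hα0]
      show Real.exp (y k) ^ m = Real.exp (y k * m)
      rw [Real.rpow_def_of_pos (Real.exp_pos _), Real.log_exp]
    have hψ : ∀ r : ℝ, 0 < r → HasDerivAt (fun r : ℝ => Real.exp (r * m))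
        ((fun r : ℝ => Real.exp (r * m) * m) r) r := by
      intro r _
      have h1 : HasDerivAt (fun s : ℝ => s * m) m r := by
        simpa using (hasDerivAt_id r).mul_const m
      exact (Real.hasDerivAt_exp (r * m)).comp r h1
    have hψd : ∀ r : ℝ, 0 < r → HasDerivAt (fun r : ℝ => Real.exp (r * m) * m)
        ((fun r : ℝ => Real.exp (r * m) * m * m) r) r := by
      intro r hr
      simpa using (hψ r hr).mul_const m
    have key : ∀ P ∈ Ω, HasDerivWithinAt (fun s => u P s)
        (Real.exp ((P k) * m) * m * m) (Ici 0) 0 := by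
      intro P hP
      have hlap := aux_lap k Ω hΩopen hΩpos _ _ _ hψ hψd
        (fun z => (u z 0) ^ m) hf hP
      refine aux_hasDeriv _ _ ?_ (ne_of_gt (aux_exp_pos3 _ m hm))
      rw [hu_pde P hP 0 self_mem_Ici, hlap]
    have hΦr : ∀ r : ℝ, 0 < r → Phi α r = ((Real.log r : ℝ) : EReal) := by
      intro r hr
      simp only [Phi]
      rw [if_neg (not_le.2 hr), if_pos hα0]
    have hval : ∀ P ∈ Ω, (u P 0)⁻¹ * (Real.exp ((P k) * m) * m * m)
        = m * m * Real.exp ((P k) * (m - 1)) := by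
      intro P hP
      rw [hu_init P hP, hφ P hP, if_pos hα0]
      have h1 : Real.exp ((P k) * (m - 1)) = (Real.exp (P k))⁻¹ * Real.exp (P k * m) := by
        rw [← Real.exp_neg, ← Real.exp_add]
        congr 1
        ring
      rw [h1]; ring
    have hder : ∀ P ∈ Ω, HasDerivWithinAt (fun t => Real.log (u P t))
        (m * m * Real.exp ((P k) * (m - 1))) (Ici 0) 0 := by
      intro P hP
      have h1 : HasDerivAt Real.log (u P 0)⁻¹ (u P 0) :=
        Real.hasDerivAt_log (ne_of_gt (hupos P hP))
      have h2 := h1.comp_hasDerivWithinAt 0 (key P hP)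
      rw [hval P hP] at h2
      exact h2
    have hΦval : ∀ P ∈ Ω, Real.log (u P 0) = P k := by
      intro P hP
      rw [hu_init P hP, hφ P hP, if_pos hα0, Real.log_exp]
    have hzero : Real.log (u xp 0) + Real.log (u xm 0) - 2 * Real.log (u x₀ 0) = 0 := by
      rw [hΦval xp hxp, hΦval xm hxm, hΦval x₀ hx₀, hcp, hcm]
      ring
    have hgap := aux_expgap a h (m - 1) hh (by linarith)
    have hm2 : 0 < m * m := by nlinarith
    have hL := aux_mul_gap (m*m) (Real.exp ((a+h)*(m-1))) (Real.exp ((a-h)*(m-1)))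
      (Real.exp (a*(m-1))) hm2 hgap
    refine aux_final Ω α u hu_pos xp xm x₀ hxp hxm hx₀ hmid Real.log hΦr
      (m * m * Real.exp ((a+h)*(m-1))) (m * m * Real.exp ((a-h)*(m-1)))
      (m * m * Real.exp (a*(m-1))) ?_ ?_ ?_ hzero (by linarith)
    · have h1 := hder xp hxp; rwa [hcp] at h1
    · have h1 := hder xm hxm; rwa [hcm] at h1
    · exact hder x₀ hx₀
  · -- case α ≠ 0
    have hαne : α ≠ 0 := hα0
    obtain ⟨hCpos, hβsign⟩ := aux_signs m α hm hαne hα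
    have hf : ∀ y ∈ Ω, (u y 0) ^ m = (fun r : ℝ => r ^ (m/α)) (y k) := by
      intro y hy
      rw [hu_init y hy, hφ y hy, if_neg hαne]
      show ((y k) ^ (1/α)) ^ m = (y k) ^ (m/α)
      rw [← Real.rpow_mul (le_of_lt (hΩpos y hy))]
      congr 1
      ring
    have hψ : ∀ r : ℝ, 0 < r → HasDerivAt (fun r : ℝ => r ^ (m/α))
        ((fun r : ℝ => (m/α) * r ^ (m/α - 1)) r) r := by
      intro r hr
      exact Real.hasDerivAt_rpow_const (Or.inl (ne_of_gt hr))
    have hψd : ∀ r : ℝ, 0 < r → HasDerivAt (fun r : ℝ => (m/α) * r ^ (m/α - 1))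
        ((fun r : ℝ => (m/α) * ((m/α - 1) * r ^ (m/α - 1 - 1))) r) r := by
      intro r hr
      exact (Real.hasDerivAt_rpow_const (Or.inl (ne_of_gt hr))).const_mul (m/α)
    have key : ∀ P ∈ Ω, HasDerivWithinAt (fun s => u P s)
        ((m/α) * ((m/α - 1) * (P k) ^ (m/α - 1 - 1))) (Ici 0) 0 := by
      intro P hP
      have hlap := aux_lap k Ω hΩopen hΩpos _ _ _ hψ hψd
        (fun z => (u z 0) ^ m) hf hP
      refine aux_hasDeriv _ _ ?_ (ne_of_gt (aux_pos_assoc (m/α) _ hCpos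
        (Real.rpow_pos_of_pos (hΩpos P hP) _)))
      rw [hu_pde P hP 0 self_mem_Ici, hlap]
    have hΦr : ∀ r : ℝ, 0 < r → Phi α r = (((r ^ α - 1)/α : ℝ) : EReal) := by
      intro r hr
      simp only [Phi]
      rw [if_neg (not_le.2 hr), if_neg hαne]
    have hΦd : ∀ r : ℝ, 0 < r →
        HasDerivAt (fun s : ℝ => (s ^ α - 1)/α) (r ^ (α - 1)) r := by
      intro r hr
      have h1 := ((Real.hasDerivAt_rpow_const (x := r) (p := α)
        (Or.inl (ne_of_gt hr))).sub_const 1).div_const α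
      rw [mul_div_cancel_left₀ _ hαne] at h1
      exact h1
    have hval : ∀ P ∈ Ω, (u P 0) ^ (α - 1) * ((m/α) * ((m/α - 1) * (P k) ^ (m/α - 1 - 1)))
        = ((m/α) * (m/α - 1)) * (P k) ^ ((1/α)*(α-1) + (m/α - 1 - 1)) := by
      intro P hP
      have hr : 0 < P k := hΩpos P hP
      rw [hu_init P hP, hφ P hP, if_neg hαne, ← Real.rpow_mul (le_of_lt hr),
        Real.rpow_add hr]
      ring
    have hder : ∀ P ∈ Ω, HasDerivWithinAt (fun t => ((u P t) ^ α - 1)/α)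
        (((m/α) * (m/α - 1)) * (P k) ^ ((1/α)*(α-1) + (m/α - 1 - 1))) (Ici 0) 0 := by
      intro P hP
      have h2 := (hΦd _ (hupos P hP)).comp_hasDerivWithinAt 0 (key P hP)
      rw [hval P hP] at h2
      exact h2
    have hΦval : ∀ P ∈ Ω, ((u P 0) ^ α - 1)/α = ((P k) - 1)/α := by
      intro P hP
      have hr : 0 < P k := hΩpos P hP
      rw [hu_init P hP, hφ P hP, if_neg hαne, ← Real.rpow_mul (le_of_lt hr),
        one_div_mul_cancel hαne, Real.rpow_one]
    have hzero : ((u xp 0) ^ α - 1)/α + ((u xm 0) ^ α - 1)/α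
        - 2 * (((u x₀ 0) ^ α - 1)/α) = 0 := by
      rw [hΦval xp hxp, hΦval xm hxm, hΦval x₀ hx₀, hcp, hcm]
      ring
    have hgap := aux_rpowgap ((1/α)*(α-1) + (m/α - 1 - 1)) a h hβsign hh ham
    have hL := aux_mul_gap ((m/α) * (m/α - 1))
      ((a+h) ^ ((1/α)*(α-1) + (m/α - 1 - 1))) ((a-h) ^ ((1/α)*(α-1) + (m/α - 1 - 1)))
      (a ^ ((1/α)*(α-1) + (m/α - 1 - 1))) hCpos hgap
    refine aux_final Ω α u hu_pos xp xm x₀ hxp hxm hx₀ hmid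
      (fun r : ℝ => (r ^ α - 1)/α) hΦr
      (((m/α) * (m/α - 1)) * (a+h) ^ ((1/α)*(α-1) + (m/α - 1 - 1)))
      (((m/α) * (m/α - 1)) * (a-h) ^ ((1/α)*(α-1) + (m/α - 1 - 1)))
      (((m/α) * (m/α - 1)) * a ^ ((1/α)*(α-1) + (m/α - 1 - 1)))
      ?_ ?_ ?_ hzero (by linarith)
    · have h1 := hder xp hxp; rwa [hcp] at h1
    · have h1 := hder xm hxm; rwa [hcm] at h1
    · exact hder x₀ hx₀
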